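/- Let (Ω, F) be a measurable space, 𝒫 a nonempty set of probability measures on (Ω, F), and X : [0,∞) × Ω → ℝ a jointly measurable process with X_0 = 0. Suppose there are constants σ̄² > 0, K > 0 and α ∈ (0,1) such that for every P ∈ 𝒫: (i) E_P[(X_t − X_s)²] ≤ σ̄² |t − s| for all s, t ≥ 0; and (ii) P(|X_t| < ε) ≤ K ε^{2α} t^{−α} for all t > 0 and ε > 0. Fix T > 0. Then for every sequence of partitions π_n = {0 = t_0^n < t_1^n < ⋯ < t_{k_n}^n = T} whose mesh μ(π_n) := max_i (t_{i+1}^n − t_i^n) tends to 0, one has sup_{P∈𝒫} E_P[ ∫_0^T ( Σ_{i=0}^{k_n−1} sgn(X_{t_i^n}) · 1_{[t_i^n, t_{i+1}^n)}(t) − sgn(X_t) )² dt ] → 0 as n → ∞. -/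

import Mathlib

open MeasureTheory Filter
open scoped ENNReal

lemma measurable_realSign : Measurable Real.sign := by
  have h : Real.sign = fun r : ℝ => if r < 0 then (-1 : ℝ) else if 0 < r then 1 else 0 := by
    funext r; rfl
  rw [h]
  exact Measurable.ite measurableSet_Iio measurable_const
    (Measurable.ite measurableSet_Ioi measurable_const measurable_const)

lemma realSign_abs_le (x : ℝ) : |Real.sign x| ≤ 1 := by
  rcases Real.sign_apply_eq x with h | h | h <;> rw [h] <;> norm_num

lemma sign_sub_sq_le (a b : ℝ) : (Real.sign a - Real.sign b) ^ 2 ≤ 4 := by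
  have ha := abs_le.1 (realSign_abs_le a)
  have hb := abs_le.1 (realSign_abs_le b)
  nlinarith [ha.1, ha.2, hb.1, hb.2]

lemma sign_eq_of_near {a b ε : ℝ} (hε : 0 < ε) (ha : ε ≤ |a|) (hab : |a - b| < ε) :
    Real.sign a = Real.sign b := by
  rcases abs_sub_lt_iff.1 hab with ⟨h1, h2⟩
  rcases le_abs.1 ha with h | h
  · rw [Real.sign_of_pos (by linarith), Real.sign_of_pos (by linarith)]
  · rw [Real.sign_of_neg (by linarith), Real.sign_of_neg (by linarith)]

lemma partition_exists {m : ℕ} {τ : Fin (m + 1) → ℝ} (hmono : StrictMono τ)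
    {t : ℝ} (h0 : τ 0 ≤ t) (hlast : t < τ (Fin.last m)) :
    ∃ i : Fin m, τ i.castSucc ≤ t ∧ t < τ i.succ := by
  classical
  set S : Finset (Fin (m + 1)) := Finset.univ.filter (fun j => τ j ≤ t) with hS
  have h0S : (0 : Fin (m + 1)) ∈ S := by simp [hS, h0]
  have hne : S.Nonempty := ⟨0, h0S⟩
  set j := S.max' hne with hj
  have hjS : j ∈ S := S.max'_mem hne
  have hjt : τ j ≤ t := by simpa [hS] using hjS
  have hjlt : (j : ℕ) < m := by
    rcases lt_or_eq_of_le (Fin.le_last j) with h | h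
    · simpa [Fin.lt_def] using h
    · exfalso; rw [h] at hjt; exact absurd hjt (not_le.2 hlast)
  refine ⟨⟨(j : ℕ), hjlt⟩, ?_, ?_⟩
  · have hcast : Fin.castSucc ⟨(j : ℕ), hjlt⟩ = j := by ext; rfl
    rw [hcast]; exact hjt
  · by_contra hcon
    push_neg at hcon
    have hmem : Fin.succ ⟨(j : ℕ), hjlt⟩ ∈ S := by
      simp only [hS, Finset.mem_filter, Finset.mem_univ, true_and]
      exact hcon
    have hle := S.le_max' _ hmem
    rw [← hj] at hle
    have : ((j : ℕ) + 1) ≤ (j : ℕ) := by simpa [Fin.le_def] using hle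
    omega

lemma step_sum_eval {m : ℕ} {τ : Fin (m + 1) → ℝ} (hmono : StrictMono τ)
    (c : Fin m → ℝ) {t : ℝ} {i : Fin m} (h1 : τ i.castSucc ≤ t) (h2 : t < τ i.succ) :
    ∑ j : Fin m, (Set.Ico (τ j.castSucc) (τ j.succ)).indicator (fun _ => c j) t = c i := by
  rw [Finset.sum_eq_single_of_mem i (Finset.mem_univ i)]
  · rw [Set.indicator_of_mem (Set.mem_Ico.2 ⟨h1, h2⟩)]
  · intro j _ hji
    apply Set.indicator_of_notMem
    rcases hji.lt_or_gt with h | h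
    · intro hmem
      have hle : τ j.succ ≤ τ i.castSucc := by
        apply hmono.monotone
        simp only [Fin.le_def, Fin.val_succ, Fin.coe_castSucc]
        have := (Fin.lt_def.1 h)
        omega
      exact absurd hmem.2 (not_lt.2 (hle.trans h1))
    · intro hmem
      have hle : τ i.succ ≤ τ j.castSucc := by
        apply hmono.monotone
        simp only [Fin.le_def, Fin.val_succ, Fin.coe_castSucc]
        have := (Fin.lt_def.1 h)
        omega
      exact absurd hmem.1 (not_le.2 (lt_of_lt_of_le h2 hle))

/-- Lemma 5.4 (approximation of `sgn(X_t)` by step processes): under the variance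
bound (i) and the nondegeneracy-type small-ball estimate (ii), for any sequence of
partitions of `[0, T]` with mesh tending to `0`,
`sup_{P ∈ 𝒫} E_P[∫_0^T |Σ_i sgn(X_{t_i}) 1_{[t_i, t_{i+1})}(t) − sgn(X_t)|² dt] → 0`. -/
theorem sgn_step_approximation {Ω : Type*} [MeasurableSpace Ω]
    (𝔓 : Set (Measure Ω)) (h𝔓 : 𝔓.Nonempty) (hprob : ∀ P ∈ 𝔓, IsProbabilityMeasure P)
    (X : ℝ → Ω → ℝ) (hX : Measurable (Function.uncurry X)) (hX0 : ∀ ω, X 0 ω = 0)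
    (σ2 K α : ℝ) (hσ2 : 0 < σ2) (hK : 0 < K) (hα : α ∈ Set.Ioo (0 : ℝ) 1)
    (hvar : ∀ P ∈ 𝔓, ∀ s t : ℝ, 0 ≤ s → 0 ≤ t →
      ∫⁻ ω, ENNReal.ofReal ((X t ω - X s ω) ^ 2) ∂P ≤ ENNReal.ofReal (σ2 * |t - s|))
    (hsmall : ∀ P ∈ 𝔓, ∀ t ε : ℝ, 0 < t → 0 < ε →
      P {ω | |X t ω| < ε} ≤ ENNReal.ofReal (K * ε ^ (2 * α) * t ^ (-α)))
    (T : ℝ) (hT : 0 < T)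
    (k : ℕ → ℕ) (τ : ∀ n, Fin (k n + 1) → ℝ)
    (hτ0 : ∀ n, τ n 0 = 0) (hτmono : ∀ n, StrictMono (τ n))
    (hτT : ∀ n, τ n (Fin.last (k n)) = T)
    (hmesh : Tendsto (fun n => ⨆ i : Fin (k n), (τ n i.succ - τ n i.castSucc))
      atTop (nhds 0)) :
    Tendsto (fun n => ⨆ P ∈ 𝔓, ∫⁻ ω, (∫⁻ t in Set.Ico (0 : ℝ) T,
        ENNReal.ofReal ((∑ i : Fin (k n),
            Set.indicator (Set.Ico (τ n i.castSucc) (τ n i.succ))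
              (fun _ => Real.sign (X (τ n i.castSucc) ω)) t
          - Real.sign (X t ω)) ^ 2) ∂(volume : Measure ℝ)) ∂P)
      atTop (nhds 0) := by
  obtain ⟨hα0, hα1⟩ := hα
  have hXm : ∀ a : ℝ, Measurable (X a) := fun a => hX.comp measurable_prodMk_left
  have h4 : (4 : ℝ≥0∞) = ENNReal.ofReal 4 := by norm_num
  -- each partition is nontrivial
  have hk : ∀ n, 0 < k n := by
    intro n
    by_contra h
    push_neg at h
    have hk0 : k n = 0 := Nat.le_zero.1 (Nat.lt_succ_iff.1 (Nat.lt_succ_of_le h))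
    have hlast0 : (Fin.last (k n)) = (0 : Fin (k n + 1)) := by
      ext; simp [hk0]
    have hTT := hτT n
    rw [hlast0, hτ0 n] at hTT
    exact hT.ne' hTT.symm
  set μ' : ℕ → ℝ := fun n => ⨆ i : Fin (k n), (τ n i.succ - τ n i.castSucc) with hμ'def
  have hlen : ∀ n (i : Fin (k n)), τ n i.succ - τ n i.castSucc ≤ μ' n := by
    intro n i
    have h := le_ciSup (f := fun j : Fin (k n) => τ n j.succ - τ n j.castSucc)
      (Set.Finite.bddAbove (Set.finite_range _)) i
    exact h
  have hμ0 : ∀ n, 0 ≤ μ' n := by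
    intro n
    refine le_trans ?_ (hlen n ⟨0, hk n⟩)
    have := hτmono n (Fin.castSucc_lt_succ (i := (⟨0, hk n⟩ : Fin (k n))))
    linarith
  rw [ENNReal.tendsto_nhds_zero]
  intro η hη
  obtain ⟨r, hr0, hrη⟩ : ∃ r : ℝ, 0 < r ∧ ENNReal.ofReal r ≤ η := by
    rcases eq_or_ne η ⊤ with h | h
    · exact ⟨1, one_pos, by simp [h]⟩
    · exact ⟨η.toReal, ENNReal.toReal_pos hη.ne' h, by rw [ENNReal.ofReal_toReal h]⟩
  -- choose δ and ε
  set δ : ℝ := r / 16 with hδdef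
  have hδ : 0 < δ := by rw [hδdef]; positivity
  have hδα : 0 < δ ^ (-α) := Real.rpow_pos_of_pos hδ _
  set c : ℝ := r / (16 * T * K * δ ^ (-α)) with hcdef
  have hc : 0 < c := by
    rw [hcdef]
    exact div_pos hr0 (by positivity)
  set ε : ℝ := min 1 (c ^ (1 / (2 * α))) with hεdef
  have hε : 0 < ε := lt_min one_pos (Real.rpow_pos_of_pos hc _)
  have hεpow : ε ^ (2 * α) ≤ c := by
    have h2α : 0 < 2 * α := by linarith
    calc ε ^ (2 * α) ≤ (c ^ (1 / (2 * α))) ^ (2 * α) :=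
          Real.rpow_le_rpow hε.le (min_le_right _ _) h2α.le
      _ = c := by
          rw [← Real.rpow_mul hc.le, one_div_mul_cancel h2α.ne', Real.rpow_one]
  -- the key single-time estimate
  have key : ∀ P ∈ 𝔓, ∀ s t M : ℝ, 0 < s → s ≤ t → δ ≤ s → t - s ≤ M →
      ∫⁻ ω, ENNReal.ofReal ((Real.sign (X s ω) - Real.sign (X t ω)) ^ 2) ∂P ≤
        ENNReal.ofReal (4 * K * ε ^ (2 * α) * δ ^ (-α) + 4 * σ2 * M / ε ^ 2) := by
    intro P hP s t M hs hst hδs htM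
    haveI := hprob P hP
    have hXs := hXm s
    have hXt := hXm t
    set A := {ω | |X s ω| < ε} with hAdef
    set B := {ω | ε ≤ |X t ω - X s ω|} with hBdef
    have hA : MeasurableSet A := measurableSet_lt hXs.abs measurable_const
    have hB : MeasurableSet B := measurableSet_le measurable_const (hXt.sub hXs).abs
    have hpt : ∀ ω, ENNReal.ofReal ((Real.sign (X s ω) - Real.sign (X t ω)) ^ 2) ≤
        A.indicator (fun _ => (4 : ℝ≥0∞)) ω + B.indicator (fun _ => (4 : ℝ≥0∞)) ω := by
      intro ω
      by_cases hA' : ω ∈ A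
      · calc ENNReal.ofReal ((Real.sign (X s ω) - Real.sign (X t ω)) ^ 2) ≤ (4 : ℝ≥0∞) := by
              rw [h4]; exact ENNReal.ofReal_le_ofReal (sign_sub_sq_le _ _)
          _ = A.indicator (fun _ => (4 : ℝ≥0∞)) ω := (Set.indicator_of_mem hA' (fun _ => (4 : ℝ≥0∞))).symm
          _ ≤ _ := le_self_add
      · by_cases hB' : ω ∈ B
        · calc ENNReal.ofReal ((Real.sign (X s ω) - Real.sign (X t ω)) ^ 2) ≤ (4 : ℝ≥0∞) := by
                rw [h4]; exact ENNReal.ofReal_le_ofReal (sign_sub_sq_le _ _)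
            _ = B.indicator (fun _ => (4 : ℝ≥0∞)) ω := (Set.indicator_of_mem hB' (fun _ => (4 : ℝ≥0∞))).symm
            _ ≤ _ := le_add_self
        · have hA'' : ¬ |X s ω| < ε := hA'
          have hB'' : ¬ ε ≤ |X t ω - X s ω| := hB'
          have h1 : ε ≤ |X s ω| := not_lt.1 hA''
          have h2 : |X s ω - X t ω| < ε := by
            have := not_le.1 hB''
            rwa [abs_sub_comm] at this
          rw [sign_eq_of_near hε h1 h2]
          simp
    have hcheb : P B ≤ ENNReal.ofReal (σ2 * (t - s) / ε ^ 2) := by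
      have hsub : B ⊆ {ω | ENNReal.ofReal (ε ^ 2) ≤ ENNReal.ofReal ((X t ω - X s ω) ^ 2)} := by
        intro ω hω
        apply ENNReal.ofReal_le_ofReal
        calc ε ^ 2 ≤ |X t ω - X s ω| ^ 2 := pow_le_pow_left₀ hε.le hω 2
          _ = (X t ω - X s ω) ^ 2 := sq_abs _
      have h1 := mul_meas_ge_le_lintegral₀
        (((hXt.sub hXs).pow_const 2).ennreal_ofReal.aemeasurable) (ENNReal.ofReal (ε ^ 2))
        (μ := P)
      have h2 : ENNReal.ofReal (ε ^ 2) * P B ≤ ENNReal.ofReal (σ2 * (t - s)) := by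
        refine le_trans (mul_le_mul_right (measure_mono hsub) _) (le_trans h1 ?_)
        have hv := hvar P hP s t hs.le (hs.trans_le hst).le
        rwa [abs_of_nonneg (by linarith : (0 : ℝ) ≤ t - s)] at hv
      rw [ENNReal.ofReal_div_of_pos (by positivity : (0 : ℝ) < ε ^ 2)]
      rw [ENNReal.le_div_iff_mul_le
        (Or.inl (by simp [ENNReal.ofReal_eq_zero]; positivity)) (Or.inl ENNReal.ofReal_ne_top)]
      rwa [mul_comm]
    calc ∫⁻ ω, ENNReal.ofReal ((Real.sign (X s ω) - Real.sign (X t ω)) ^ 2) ∂P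
        ≤ ∫⁻ ω, (A.indicator (fun _ => (4 : ℝ≥0∞)) ω + B.indicator (fun _ => (4 : ℝ≥0∞)) ω) ∂P :=
          lintegral_mono hpt
      _ = 4 * P A + 4 * P B := by
          rw [lintegral_add_left (measurable_const.indicator hA),
            lintegral_indicator_const hA, lintegral_indicator_const hB]
      _ ≤ 4 * ENNReal.ofReal (K * ε ^ (2 * α) * s ^ (-α)) +
            4 * ENNReal.ofReal (σ2 * (t - s) / ε ^ 2) := by
          exact add_le_add (mul_le_mul_right (hsmall P hP s ε hs hε) _)
            (mul_le_mul_right hcheb _)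
      _ = ENNReal.ofReal (4 * (K * ε ^ (2 * α) * s ^ (-α)) + 4 * (σ2 * (t - s) / ε ^ 2)) := by
          rw [ENNReal.ofReal_add (by positivity) ?h2]
          · rw [ENNReal.ofReal_mul (by norm_num : (0:ℝ) ≤ 4),
              ENNReal.ofReal_mul (by norm_num : (0:ℝ) ≤ 4)]
            norm_num
          case h2 =>
            have : (0:ℝ) ≤ t - s := by linarith
            positivity
      _ ≤ ENNReal.ofReal (4 * K * ε ^ (2 * α) * δ ^ (-α) + 4 * σ2 * M / ε ^ 2) := by
          apply ENNReal.ofReal_le_ofReal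
          have hrs : s ^ (-α) ≤ δ ^ (-α) :=
            Real.rpow_le_rpow_of_nonpos hδ hδs (by linarith)
          have e1 : 4 * (K * ε ^ (2 * α) * s ^ (-α)) ≤ 4 * K * ε ^ (2 * α) * δ ^ (-α) := by
            calc 4 * (K * ε ^ (2 * α) * s ^ (-α)) = (4 * K * ε ^ (2 * α)) * s ^ (-α) := by ring
              _ ≤ (4 * K * ε ^ (2 * α)) * δ ^ (-α) :=
                  mul_le_mul_of_nonneg_left hrs (by positivity)
              _ = 4 * K * ε ^ (2 * α) * δ ^ (-α) := by ring
          have e2 : 4 * (σ2 * (t - s) / ε ^ 2) ≤ 4 * σ2 * M / ε ^ 2 := by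
            calc 4 * (σ2 * (t - s) / ε ^ 2) = (4 * σ2 / ε ^ 2) * (t - s) := by ring
              _ ≤ (4 * σ2 / ε ^ 2) * M := mul_le_mul_of_nonneg_left htM (by positivity)
              _ = 4 * σ2 * M / ε ^ 2 := by ring
          linarith
  -- the main bound per n and P
  have main : ∀ n, ∀ P ∈ 𝔓,
      (∫⁻ ω, (∫⁻ t in Set.Ico (0 : ℝ) T,
        ENNReal.ofReal ((∑ i : Fin (k n),
            Set.indicator (Set.Ico (τ n i.castSucc) (τ n i.succ))
              (fun _ => Real.sign (X (τ n i.castSucc) ω)) t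
          - Real.sign (X t ω)) ^ 2) ∂(volume : Measure ℝ)) ∂P) ≤
      ENNReal.ofReal ((4 * K * ε ^ (2 * α) * δ ^ (-α) + 4 * σ2 * μ' n / ε ^ 2) * T
        + 4 * (δ + μ' n)) := by
    intro n P hP
    haveI := hprob P hP
    set C : ℝ≥0∞ := ENNReal.ofReal (4 * K * ε ^ (2 * α) * δ ^ (-α) + 4 * σ2 * μ' n / ε ^ 2)
      with hCdef
    have hmeas : Measurable (fun p : Ω × ℝ => ENNReal.ofReal ((∑ i : Fin (k n),
        Set.indicator (Set.Ico (τ n i.castSucc) (τ n i.succ))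
          (fun _ => Real.sign (X (τ n i.castSucc) p.1)) p.2
        - Real.sign (X p.2 p.1)) ^ 2)) := by
      apply Measurable.ennreal_ofReal
      apply Measurable.pow_const
      apply Measurable.sub
      · apply Finset.measurable_sum
        intro i _
        have hrw : (fun p : Ω × ℝ => Set.indicator (Set.Ico (τ n i.castSucc) (τ n i.succ))
              (fun _ => Real.sign (X (τ n i.castSucc) p.1)) p.2)
            = fun p : Ω × ℝ => Real.sign (X (τ n i.castSucc) p.1) *
              Set.indicator (Set.Ico (τ n i.castSucc) (τ n i.succ)) (fun _ => (1 : ℝ)) p.2 := by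
          funext p
          by_cases h : p.2 ∈ Set.Ico (τ n i.castSucc) (τ n i.succ) <;>
            simp [Set.indicator_of_mem, Set.indicator_of_notMem, h]
        rw [hrw]
        exact (measurable_realSign.comp ((hXm _).comp measurable_fst)).mul
          ((measurable_const.indicator measurableSet_Ico).comp measurable_snd)
      · exact measurable_realSign.comp (hX.comp measurable_swap)
    rw [lintegral_lintegral_swap hmeas.aemeasurable]
    have hpt : ∀ t ∈ Set.Ico (0 : ℝ) T,
        (∫⁻ ω, ENNReal.ofReal ((∑ i : Fin (k n),
          Set.indicator (Set.Ico (τ n i.castSucc) (τ n i.succ))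
            (fun _ => Real.sign (X (τ n i.castSucc) ω)) t
          - Real.sign (X t ω)) ^ 2) ∂P) ≤
        C + (Set.Ico (0 : ℝ) (δ + μ' n)).indicator (fun _ => (4 : ℝ≥0∞)) t := by
      intro t ht
      obtain ⟨i, hi1, hi2⟩ := partition_exists (τ := τ n) (hτmono n) (t := t)
        (by rw [hτ0 n]; exact ht.1) (by rw [hτT n]; exact ht.2)
      have heval : ∀ ω, ENNReal.ofReal ((∑ j : Fin (k n),
          Set.indicator (Set.Ico (τ n j.castSucc) (τ n j.succ))
            (fun _ => Real.sign (X (τ n j.castSucc) ω)) t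
          - Real.sign (X t ω)) ^ 2) =
          ENNReal.ofReal ((Real.sign (X (τ n i.castSucc) ω) - Real.sign (X t ω)) ^ 2) := by
        intro ω
        rw [step_sum_eval (hτmono n) (fun j => Real.sign (X (τ n j.castSucc) ω)) hi1 hi2]
      rw [lintegral_congr heval]
      have hs0 : (0 : ℝ) ≤ τ n i.castSucc := by
        rw [← hτ0 n]; exact (hτmono n).monotone (Fin.zero_le _)
      have hts : t - τ n i.castSucc ≤ μ' n := by
        have := hlen n i; linarith
      by_cases hδs : δ ≤ τ n i.castSucc
      · have h0s : 0 < τ n i.castSucc := lt_of_lt_of_le hδ hδs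
        exact le_trans (key P hP _ t (μ' n) h0s hi1 hδs hts) le_self_add
      · push_neg at hδs
        have htlt : t < δ + μ' n := by
          have := hlen n i; linarith
        calc ∫⁻ ω, ENNReal.ofReal
              ((Real.sign (X (τ n i.castSucc) ω) - Real.sign (X t ω)) ^ 2) ∂P
            ≤ ∫⁻ _, (4 : ℝ≥0∞) ∂P := by
              apply lintegral_mono
              intro ω
              rw [h4]
              exact ENNReal.ofReal_le_ofReal (sign_sub_sq_le _ _)
          _ = 4 := by simp
          _ = (Set.Ico (0 : ℝ) (δ + μ' n)).indicator (fun _ => (4 : ℝ≥0∞)) t :=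
              (Set.indicator_of_mem (Set.mem_Ico.2 ⟨ht.1, htlt⟩) (fun _ => (4 : ℝ≥0∞))).symm
          _ ≤ _ := le_add_self
    calc (∫⁻ t in Set.Ico (0 : ℝ) T, ∫⁻ ω, ENNReal.ofReal ((∑ i : Fin (k n),
          Set.indicator (Set.Ico (τ n i.castSucc) (τ n i.succ))
            (fun _ => Real.sign (X (τ n i.castSucc) ω)) t
          - Real.sign (X t ω)) ^ 2) ∂P ∂(volume : Measure ℝ))
        ≤ ∫⁻ t in Set.Ico (0 : ℝ) T,
            (C + (Set.Ico (0 : ℝ) (δ + μ' n)).indicator (fun _ => (4 : ℝ≥0∞)) t)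
            ∂(volume : Measure ℝ) := setLIntegral_mono' measurableSet_Ico hpt
      _ = C * volume (Set.Ico (0 : ℝ) T)
            + 4 * volume (Set.Ico (0 : ℝ) (δ + μ' n) ∩ Set.Ico (0 : ℝ) T) := by
          rw [lintegral_add_left measurable_const, setLIntegral_const,
            lintegral_indicator_const measurableSet_Ico,
            Measure.restrict_apply measurableSet_Ico]
      _ ≤ C * ENNReal.ofReal T + 4 * ENNReal.ofReal (δ + μ' n) := by
          apply add_le_add
          · rw [Real.volume_Ico]; simp
          · refine mul_le_mul_right ?_ _
            refine le_trans (measure_mono Set.inter_subset_left) ?_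
            rw [Real.volume_Ico]; simp
      _ = ENNReal.ofReal ((4 * K * ε ^ (2 * α) * δ ^ (-α) + 4 * σ2 * μ' n / ε ^ 2) * T
            + 4 * (δ + μ' n)) := by
          have hC0 : (0 : ℝ) ≤ 4 * K * ε ^ (2 * α) * δ ^ (-α) + 4 * σ2 * μ' n / ε ^ 2 := by
            have := hμ0 n
            positivity
          rw [hCdef, ← ENNReal.ofReal_mul hC0, h4,
            ← ENNReal.ofReal_mul (by norm_num : (0:ℝ) ≤ 4),
            ← ENNReal.ofReal_add (by positivity) ?pos]
          case pos =>
            have := hμ0 n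
            positivity
  -- conclude via the mesh tendsto
  set B : ℕ → ℝ := fun n => (4 * K * ε ^ (2 * α) * δ ^ (-α) + 4 * σ2 * μ' n / ε ^ 2) * T
    + 4 * (δ + μ' n) with hBdef
  have hBt : Tendsto B atTop
      (nhds ((4 * K * ε ^ (2 * α) * δ ^ (-α) + 4 * σ2 * 0 / ε ^ 2) * T + 4 * (δ + 0))) := by
    apply Tendsto.add
    · apply Tendsto.mul_const
      exact tendsto_const_nhds.add (((hmesh.const_mul (4 * σ2)).div_const (ε ^ 2)))
    · exact (tendsto_const_nhds.add hmesh).const_mul 4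
  have heq : (4 * K * ε ^ (2 * α) * δ ^ (-α) + 4 * σ2 * 0 / ε ^ 2) * T + 4 * (δ + 0)
      = 4 * K * ε ^ (2 * α) * δ ^ (-α) * T + 4 * δ := by ring
  rw [heq] at hBt
  have hlt : 4 * K * ε ^ (2 * α) * δ ^ (-α) * T + 4 * δ < r := by
    have h1 : 4 * K * ε ^ (2 * α) * δ ^ (-α) * T ≤ 4 * K * c * δ ^ (-α) * T := by
      calc 4 * K * ε ^ (2 * α) * δ ^ (-α) * T = ε ^ (2 * α) * (4 * K * δ ^ (-α) * T) := by ring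
        _ ≤ c * (4 * K * δ ^ (-α) * T) := mul_le_mul_of_nonneg_right hεpow (by positivity)
        _ = 4 * K * c * δ ^ (-α) * T := by ring
    have h2 : 4 * K * c * δ ^ (-α) * T = r / 4 := by
      rw [hcdef]
      field_simp
      ring
    have h3 : 4 * δ = r / 4 := by rw [hδdef]; ring
    linarith
  filter_upwards [hBt.eventually_lt_const hlt] with n hn
  refine le_trans (iSup₂_le fun P hP => ?_) (le_trans (ENNReal.ofReal_le_ofReal hn.le) hrη)
  exact main n P hP
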